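/- arXiv:2505.00874 — 3 statements merged into one kernel-verified Lean document; each statement's English description precedes it below -/
import Mathlib

section
/- Let G be a finite planar graph with vertex set V, edge set E, and face set F satisfying Euler's formula |V| - |E| + |F| = 2. Suppose every vertex has degree at least 3, every face has at least 3 edges, the sum of vertex degrees equals 2|E|, and the sum of face sizes equals 2|E|. If G has at most two vertices of degree exactly 3 and at most two faces of size exactly 3, then a contradiction follows. In other words, G must contain at least three vertices of degree 3 or at least three triangular faces. -/
theorem stmt_0 {V E F : Type*} [Fintype V] [Fintype E] [Fintype F]
    [DecidableEq V] [DecidableEq F]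
    (deg : V → ℕ) (gon : F → ℕ)
    (hdeg : ∑ v, deg v = 2 * Fintype.card E)
    (hgon : ∑ σ, gon σ = 2 * Fintype.card E)
    (hdeg3 : ∀ v, 3 ≤ deg v)
    (hgon3 : ∀ σ, 3 ≤ gon σ)
    (heuler : (Fintype.card V : ℤ) - Fintype.card E + Fintype.card F = 2) :
    3 ≤ (Finset.univ.filter fun v => deg v = 3).card ∨
      3 ≤ (Finset.univ.filter fun σ => gon σ = 3).card := by
  by_contra h
  push_neg at h
  obtain ⟨h1, h2⟩ := h
  have key : (∑ v, (4 - (deg v : ℤ))) + (∑ σ, (4 - (gon σ : ℤ))) = 8 := by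
    have hd : (∑ v, (deg v : ℤ)) = 2 * Fintype.card E := by
      exact_mod_cast congrArg (Nat.cast : ℕ → ℤ) hdeg
    have hg : (∑ σ, (gon σ : ℤ)) = 2 * Fintype.card E := by
      exact_mod_cast congrArg (Nat.cast : ℕ → ℤ) hgon
    simp only [Finset.sum_sub_distrib, Finset.sum_const, Finset.card_univ, nsmul_eq_mul]
    rw [hd, hg]
    linarith
  have bv : (∑ v, (4 - (deg v : ℤ))) ≤
      ((Finset.univ.filter fun v => deg v = 3).card : ℤ) := by
    calc (∑ v, (4 - (deg v : ℤ)))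
        ≤ ∑ v, (if deg v = 3 then (1 : ℤ) else 0) := by
          apply Finset.sum_le_sum
          intro v _
          by_cases hv : deg v = 3
          · simp [hv]
          · have : 4 ≤ deg v := lt_of_le_of_ne (hdeg3 v) (Ne.symm hv)
            have : (4 : ℤ) ≤ deg v := by exact_mod_cast this
            simp [hv]; linarith
      _ = ((Finset.univ.filter fun v => deg v = 3).card : ℤ) := by
          simp [Finset.sum_boole]
  have bf : (∑ σ, (4 - (gon σ : ℤ))) ≤
      ((Finset.univ.filter fun σ => gon σ = 3).card : ℤ) := by
    calc (∑ σ, (4 - (gon σ : ℤ)))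
        ≤ ∑ σ, (if gon σ = 3 then (1 : ℤ) else 0) := by
          apply Finset.sum_le_sum
          intro σ _
          by_cases hσ : gon σ = 3
          · simp [hσ]
          · have : 4 ≤ gon σ := lt_of_le_of_ne (hgon3 σ) (Ne.symm hσ)
            have : (4 : ℤ) ≤ gon σ := by exact_mod_cast this
            simp [hσ]; linarith
      _ = ((Finset.univ.filter fun σ => gon σ = 3).card : ℤ) := by
          simp [Finset.sum_boole]
  have h1' : ((Finset.univ.filter fun v => deg v = 3).card : ℤ) ≤ 2 := by
    exact_mod_cast Nat.lt_succ_iff.mp h1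
  have h2' : ((Finset.univ.filter fun σ => gon σ = 3).card : ℤ) ≤ 2 := by
    exact_mod_cast Nat.lt_succ_iff.mp h2
  linarith
end

section
/- Let G be a finite planar graph with Euler relation |V| - |E| + |F| = 2, where every vertex has degree at least 3 and every face has size at least 3 (with ∑ deg = 2|E| and ∑ gon = 2|E|). Let e be a fixed edge of G. Then G contains a triangular face not incident to e, or G contains a vertex of degree 3 not incident to e, given that at most two triangular faces are incident to any edge and at most two degree-3 vertices are incident to any edge. -/
lemma key_count {α : Type*} [Fintype α] (f : α → ℕ) [DecidablePred fun a => f a = 3]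
    (h3 : ∀ a, 3 ≤ f a) :
    4 * Fintype.card α ≤ (∑ a, f a) + (Finset.univ.filter fun a => f a = 3).card := by
  have step : ∀ a : α, 4 ≤ f a + (if f a = 3 then 1 else 0) := by
    intro a
    have := h3 a
    by_cases hfa : f a = 3 <;> simp [hfa] <;> omega
  calc 4 * Fintype.card α = ∑ _a : α, 4 := by
        rw [Finset.sum_const, smul_eq_mul, Fintype.card, mul_comm]
    _ ≤ ∑ a : α, (f a + if f a = 3 then 1 else 0) := Finset.sum_le_sum fun a _ => step a
    _ = (∑ a, f a) + (Finset.univ.filter fun a => f a = 3).card := by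
        rw [Finset.sum_add_distrib, Finset.card_filter]

theorem stmt_1 {V E F : Type*} [Fintype V] [Fintype E] [Fintype F]
    [DecidableEq V] [DecidableEq F]
    (deg : V → ℕ) (gon : F → ℕ)
    (incF : E → F → Prop) (incV : E → V → Prop)
    [∀ e σ, Decidable (incF e σ)] [∀ e v, Decidable (incV e v)]
    (hdeg : ∑ v, deg v = 2 * Fintype.card E)
    (hgon : ∑ σ, gon σ = 2 * Fintype.card E)
    (hdeg3 : ∀ v, 3 ≤ deg v)
    (hgon3 : ∀ σ, 3 ≤ gon σ)
    (heuler : (Fintype.card V : ℤ) - Fintype.card E + Fintype.card F = 2)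
    (hEF : ∀ e : E, (Finset.univ.filter fun σ => incF e σ).card = 2)
    (hEV : ∀ e : E, (Finset.univ.filter fun v => incV e v).card = 2)
    (e : E) :
    (∃ σ : F, gon σ = 3 ∧ ¬ incF e σ) ∨ (∃ v : V, deg v = 3 ∧ ¬ incV e v) := by
  by_contra h
  push_neg at h
  obtain ⟨hF, hV⟩ := h
  have hTcard : (Finset.univ.filter fun σ : F => gon σ = 3).card ≤ 2 := by
    rw [← hEF e]
    apply Finset.card_le_card
    intro σ hσ
    simp only [Finset.mem_filter, Finset.mem_univ, true_and] at *
    exact hF σ hσ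
  have hVcard : (Finset.univ.filter fun v : V => deg v = 3).card ≤ 2 := by
    rw [← hEV e]
    apply Finset.card_le_card
    intro v hv
    simp only [Finset.mem_filter, Finset.mem_univ, true_and] at *
    exact hV v hv
  have h1 := key_count gon hgon3
  have h2 := key_count deg hdeg3
  rw [hgon] at h1
  rw [hdeg] at h2
  omega
end

section
/- Let (G, v, ω) be a sequence-limit of self-stressed frameworks under contraction: given finite graphs G and a quotient graph G̃ = G/∼ obtained by contracting equivalence classes of vertices, a sequence of placements vⁿ : V(G) → ℝ² converging to v* with v*ᵢ = ṽ_I whenever i ∈ I, and stresses ωⁿ : E(G) → ℝ satisfying the equilibrium condition ∑_{j : ij ∈ E} ωⁿ_{ij}(vⁿ_j − vⁿ_i) = 0 at every vertex, with ωⁿ_{ij} → ω*_{ij} whenever i and j are in different classes. Define ω̃_{IJ} := ∑_{i ∈ I, j ∈ J} ω*_{ij} for classes I ≠ J adjacent in G̃. Then ω̃ is a self-stress on (G̃, ṽ): for each class I, ∑_{J ≠ I} ω̃_{IJ}(ṽ_J − ṽ_I) = 0. -/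
open Filter

theorem stmt_4 {V W : Type*} [Fintype V] [Fintype W] [DecidableEq W]
    (c : V → W)
    (ω : ℕ → V → V → ℝ) (ωstar : V → V → ℝ)
    (vn : ℕ → V → EuclideanSpace ℝ (Fin 2)) (vt : W → EuclideanSpace ℝ (Fin 2))
    (hsymm : ∀ n i j, ω n i j = ω n j i)
    (hequil : ∀ n i, ∑ j, ω n i j • (vn n j - vn n i) = 0)
    (hv : ∀ i, Tendsto (fun n => vn n i) atTop (nhds (vt (c i))))
    (hω : ∀ i j, c i ≠ c j → Tendsto (fun n => ω n i j) atTop (nhds (ωstar i j))) :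
    ∀ I : W,
      ∑ J, (∑ i, ∑ j, if c i = I ∧ c j = J ∧ I ≠ J then ωstar i j else 0) •
        (vt J - vt I) = 0 := by
  classical
  intro I
  -- The approximating sum
  set S : ℕ → EuclideanSpace ℝ (Fin 2) := fun n =>
    ∑ i, ∑ j, (if c i = I ∧ ¬ c j = I then ω n i j else 0) • (vn n j - vn n i) with hSdef
  -- S n = 0 for all n
  have hS : ∀ n, S n = 0 := by
    intro n
    have hsplit : S n =
        (∑ i, ∑ j, (if c i = I then ω n i j else 0) • (vn n j - vn n i)) -
        (∑ i, ∑ j, (if c i = I ∧ c j = I then ω n i j else 0) • (vn n j - vn n i)) := by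
      rw [hSdef]
      simp only [← Finset.sum_sub_distrib]
      refine Finset.sum_congr rfl fun i _ => Finset.sum_congr rfl fun j _ => ?_
      by_cases h1 : c i = I <;> by_cases h2 : c j = I <;> simp [h1, h2]
    have hterm1 : ∑ i, ∑ j, (if c i = I then ω n i j else 0) • (vn n j - vn n i) = 0 := by
      refine Finset.sum_eq_zero fun i _ => ?_
      by_cases h : c i = I
      · simp only [h, if_pos]
        simpa using hequil n i
      · simp [h]
    have hterm2 : ∑ i, ∑ j, (if c i = I ∧ c j = I then ω n i j else 0) • (vn n j - vn n i) = 0 := by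
      set g : V → V → EuclideanSpace ℝ (Fin 2) := fun i j =>
        (if c i = I ∧ c j = I then ω n i j else 0) • (vn n j - vn n i) with hg
      have hanti : ∀ i j, g i j + g j i = 0 := by
        intro i j
        by_cases h : c i = I ∧ c j = I
        · have h' : c j = I ∧ c i = I := ⟨h.2, h.1⟩
          simp only [hg, h, h', if_pos]
          rw [hsymm n j i, ← smul_add]
          simp
        · have h' : ¬ (c j = I ∧ c i = I) := fun hc => h ⟨hc.2, hc.1⟩
          simp [hg, h, h']
      have hsum : (∑ i, ∑ j, g i j) + (∑ i, ∑ j, g j i) = 0 := by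
        simp_rw [← Finset.sum_add_distrib]
        exact Finset.sum_eq_zero fun i _ => Finset.sum_eq_zero fun j _ => hanti i j
      have hcomm : (∑ i, ∑ j, g j i) = ∑ i, ∑ j, g i j := Finset.sum_comm
      rw [hcomm] at hsum
      have h2 : (2:ℝ) • (∑ i, ∑ j, g i j) = 0 := by rw [two_smul]; exact hsum
      exact (smul_eq_zero.mp h2).resolve_left (by norm_num)
    rw [hsplit, hterm1, hterm2, sub_zero]
  -- The limit of S
  set L : EuclideanSpace ℝ (Fin 2) :=
    ∑ i, ∑ j, (if c i = I ∧ ¬ c j = I then ωstar i j else 0) • (vt (c j) - vt I) with hLdef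
  have hlim : Tendsto S atTop (nhds L) := by
    rw [hSdef, hLdef]
    refine tendsto_finset_sum _ fun i _ => tendsto_finset_sum _ fun j _ => ?_
    by_cases h : c i = I ∧ ¬ c j = I
    · simp only [h, if_pos]
      have hne : c i ≠ c j := fun hc => h.2 (hc ▸ h.1)
      have hvt : Tendsto (fun n => vn n j - vn n i) atTop (nhds (vt (c j) - vt I)) := by
        have := (hv j).sub (hv i)
        rwa [h.1] at this
      exact (hω i j hne).smul hvt
    · simp only [h, if_neg, not_false_iff, zero_smul]
      exact tendsto_const_nhds
  have hL0 : L = 0 := by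
    have : Tendsto S atTop (nhds 0) := by
      simp only [funext hS]
      exact tendsto_const_nhds
    exact tendsto_nhds_unique hlim this
  -- Identify the goal with L
  have hgoal : (∑ J, (∑ i, ∑ j, if c i = I ∧ c j = J ∧ I ≠ J then ωstar i j else 0) •
      (vt J - vt I)) = L := by
    rw [hLdef]
    simp_rw [Finset.sum_smul, ite_smul, zero_smul]
    rw [Finset.sum_comm]
    refine Finset.sum_congr rfl fun i _ => ?_
    rw [Finset.sum_comm]
    refine Finset.sum_congr rfl fun j _ => ?_
    rw [Finset.sum_eq_single (c j)]
    · by_cases h1 : c i = I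
      · by_cases h2 : c j = I
        · simp [h1, h2]
        · have h2' : I ≠ c j := fun h => h2 h.symm
          simp [h1, h2, h2']
      · simp [h1]
    · intro J _ hJ
      have : ¬ (c i = I ∧ c j = J ∧ I ≠ J) := fun hc => hJ hc.2.1.symm
      simp [this]
    · simp
  rw [hgoal, hL0]
end
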